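/- Consider the free graded Z-module C with generators a1, a2, a3 in degree 1, b1, b2, b3 in degree 0, b4 in degree k+1, b5 in degree k-1, b6 in degree -k, b7 in degree k, with differential d(a1) = 0, d(a2) = b1 + b2 + (1-m)b3, d(a3) = b1 + b3, d(b7) = (m-1)b5, d(b4) = (-1)^k b6, and d = 0 on the remaining generators, where m is an integer with m ∉ {0,1,2} and k is an integer. Then the homology of C is Z in degree 1 (class of a1), Z in degree 0 (class of b1 = -[b3]), Z/(m-1)Z in degree k-1 (class of b5), and zero in all other degrees. -/

import Mathlib

/-- Graded piece of `ι → ℤ` spanned by the standard basis vectors of a given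
degree. -/
def gradedPiece {ι : Type} [DecidableEq ι] (deg : ι → ℤ) (j : ℤ) :
    Submodule ℤ (ι → ℤ) :=
  Submodule.span ℤ {v | ∃ g, deg g = j ∧ v = Pi.single g 1}

/-- The degree-`j` homology of a homogeneous differential `D` on a graded
module, i.e. `(ker D ∩ P_j) / (im D ∩ P_j)`. -/
def homologyAt {R V : Type*} [Ring R] [AddCommGroup V] [Module R V]
    (D : V →ₗ[R] V) (P : Submodule R V) : Type _ :=
  ↥(LinearMap.ker D ⊓ P) ⧸
    Submodule.comap (LinearMap.ker D ⊓ P).subtype (LinearMap.range D ⊓ P)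

noncomputable instance {R V : Type*} [Ring R] [AddCommGroup V] [Module R V]
    (D : V →ₗ[R] V) (P : Submodule R V) : AddCommGroup (homologyAt D P) :=
  Submodule.Quotient.addCommGroup _

noncomputable instance {R V : Type*} [Ring R] [AddCommGroup V] [Module R V]
    (D : V →ₗ[R] V) (P : Submodule R V) : Module R (homologyAt D P) :=
  Submodule.Quotient.module _

/-- Generators `a1, a2, a3` (indices 0-2), `b1, b2, b3` (indices 3-5),
`b4` (index 6, degree `k+1`), `b5` (index 7, degree `k-1`),
`b6` (index 8, degree `-k`), `b7` (index 9, degree `k`). -/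
def deg14 (k : ℤ) : Fin 10 → ℤ := ![1, 1, 1, 0, 0, 0, k + 1, k - 1, -k, k]

/-- Differential: `d a1 = 0`, `d a2 = b1 + b2 + (1-m) b3`, `d a3 = b1 + b3`,
`d b7 = (m-1) b5`, `d b4 = (-1)^k b6`, zero on the remaining generators. -/
noncomputable def d14 (m k : ℤ) : (Fin 10 → ℤ) →ₗ[ℤ] (Fin 10 → ℤ) :=
  (Pi.basisFun ℤ (Fin 10)).constr ℤ
    ![0,
      Pi.single 3 1 + Pi.single 4 1 + (1 - m) • Pi.single 5 1,
      Pi.single 3 1 + Pi.single 5 1,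
      0, 0, 0,
      (((-1 : ℤˣ) ^ k : ℤˣ) : ℤ) • Pi.single 8 1,
      0, 0,
      (m - 1) • Pi.single 7 1]

lemma d14_apply (m k : ℤ) (x : Fin 10 → ℤ) :
    d14 m k x = Pi.single 3 (x 1 + x 2) + Pi.single 4 (x 1)
      + Pi.single 5 ((1 - m) * x 1 + x 2) + Pi.single 7 ((m - 1) * x 9)
      + Pi.single 8 ((((-1 : ℤˣ) ^ k : ℤˣ) : ℤ) * x 6) := by
  funext g
  rw [d14, Module.Basis.constr_apply_fintype, Pi.basisFun_equivFun]
  fin_cases g <;>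
    simp [Fin.sum_univ_succ, Pi.single_apply,
      show ((2:Fin 3).succ.succ.succ.succ.succ.succ.succ : Fin 10) = 9 from rfl,
      show ((2:Fin 6).succ.succ.succ.succ : Fin 10) = 6 from rfl] <;> ring

lemma d14_coord (m k : ℤ) (x : Fin 10 → ℤ) :
    d14 m k x 0 = 0 ∧ d14 m k x 1 = 0 ∧ d14 m k x 2 = 0 ∧
    d14 m k x 3 = x 1 + x 2 ∧ d14 m k x 4 = x 1 ∧
    d14 m k x 5 = (1 - m) * x 1 + x 2 ∧ d14 m k x 6 = 0 ∧
    d14 m k x 7 = (m - 1) * x 9 ∧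
    d14 m k x 8 = (((-1 : ℤˣ) ^ k : ℤˣ) : ℤ) * x 6 ∧ d14 m k x 9 = 0 := by
  rw [d14_apply]
  simp [Pi.single_apply]

lemma mem_ker_d14 (m k : ℤ) (hm1 : m ≠ 1) (x : Fin 10 → ℤ) :
    x ∈ LinearMap.ker (d14 m k) ↔ x 1 = 0 ∧ x 2 = 0 ∧ x 6 = 0 ∧ x 9 = 0 := by
  rw [LinearMap.mem_ker]
  constructor
  · intro h
    obtain ⟨-, -, -, h3, h4, h5, -, h7, h8, -⟩ := d14_coord m k x
    rw [h] at h3 h4 h5 h7 h8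
    simp only [Pi.zero_apply] at h3 h4 h5 h7 h8
    have hu : ((((-1 : ℤˣ) ^ k : ℤˣ) : ℤ)) * x 6 = 0 → x 6 = 0 := by
      intro h
      rcases Int.units_eq_one_or ((-1 : ℤˣ) ^ k) with hε | hε <;> rw [hε] at h <;>
        simpa using h
    refine ⟨by linarith, by linarith, hu h8.symm ▸ hu (by linarith), ?_⟩
    · have : m - 1 ≠ 0 := by omega
      exact by
        have := h7
        rcases mul_eq_zero.mp (by linarith : (m-1) * x 9 = 0) with h' | h'
        · omega
        · exact h'
  · rintro ⟨h1, h2, h6, h9⟩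
    rw [d14_apply]
    funext g
    simp [h1, h2, h6, h9, Pi.single_apply]

lemma mem_range_d14 (m k : ℤ) (x : Fin 10 → ℤ) :
    x ∈ LinearMap.range (d14 m k) ↔
      x 0 = 0 ∧ x 1 = 0 ∧ x 2 = 0 ∧ x 6 = 0 ∧ x 9 = 0 ∧
      x 5 = x 3 - m * x 4 ∧ (m - 1) ∣ x 7 := by
  constructor
  · rintro ⟨y, rfl⟩
    obtain ⟨h0, h1, h2, h3, h4, h5, h6, h7, h8, h9⟩ := d14_coord m k y
    refine ⟨h0, h1, h2, h6, h9, by rw [h3, h4, h5]; ring, ⟨y 9, h7⟩⟩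
  · rintro ⟨h0, h1, h2, h6, h9, h5, t, h7⟩
    refine ⟨Pi.single 1 (x 4) + Pi.single 2 (x 3 - x 4)
      + Pi.single 6 ((((-1 : ℤˣ) ^ k : ℤˣ) : ℤ) * x 8) + Pi.single 9 t, ?_⟩
    have hE : ((((-1 : ℤˣ) ^ k : ℤˣ) : ℤ)) * ((((-1 : ℤˣ) ^ k : ℤˣ) : ℤ)) = 1 := by
      rw [← Units.val_mul, Int.units_mul_self, Units.val_one]
    rw [d14_apply]
    funext g
    fin_cases g <;>
      simp [Pi.single_apply, h0, h1, h2, h6, h9, h5, h7] <;> ring_nf <;>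
      first
        | rfl
        | (rw [sq, hE]; ring)

def suppPiece {ι : Type} [DecidableEq ι] (deg : ι → ℤ) (j : ℤ) :
    Submodule ℤ (ι → ℤ) where
  carrier := {x | ∀ g, deg g ≠ j → x g = 0}
  add_mem' := by intro a b ha hb g hg; simp [ha g hg, hb g hg]
  zero_mem' := by intro g _; rfl
  smul_mem' := by intro c x hx g hg; simp [hx g hg]

lemma mem_gradedPiece {ι : Type} [Fintype ι] [DecidableEq ι] (deg : ι → ℤ)
    (j : ℤ) (x : ι → ℤ) :
    x ∈ gradedPiece deg j ↔ ∀ g, deg g ≠ j → x g = 0 := by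
  constructor
  · intro hx
    have : gradedPiece deg j ≤ suppPiece deg j := by
      rw [gradedPiece, Submodule.span_le]
      rintro v ⟨g, hg, rfl⟩ g' hg'
      have : g' ≠ g := fun h => hg' (h ▸ hg)
      simp [Pi.single_apply, this]
    exact this hx
  · intro hx
    have hxe : x = ∑ g : ι, Pi.single g (x g) := (Finset.univ_sum_single x).symm
    rw [hxe]
    refine Submodule.sum_mem _ fun g _ => ?_
    by_cases hg : deg g = j
    · have : Pi.single g (x g) = x g • (Pi.single g 1 : ι → ℤ) := by
        rw [← Pi.single_smul, smul_eq_mul, mul_one]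
      rw [this]
      exact Submodule.smul_mem _ _ (Submodule.subset_span ⟨g, hg, rfl⟩)
    · rw [hx g hg]
      simp

lemma deg14_0 (k : ℤ) : deg14 k 0 = 1 := rfl
lemma deg14_1 (k : ℤ) : deg14 k 1 = 1 := rfl
lemma deg14_2 (k : ℤ) : deg14 k 2 = 1 := rfl
lemma deg14_3 (k : ℤ) : deg14 k 3 = 0 := rfl
lemma deg14_4 (k : ℤ) : deg14 k 4 = 0 := rfl
lemma deg14_5 (k : ℤ) : deg14 k 5 = 0 := rfl
lemma deg14_6 (k : ℤ) : deg14 k 6 = k + 1 := rfl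
lemma deg14_7 (k : ℤ) : deg14 k 7 = k - 1 := rfl
lemma deg14_8 (k : ℤ) : deg14 k 8 = -k := rfl
lemma deg14_9 (k : ℤ) : deg14 k 9 = k := rfl

lemma mem_P14 (k j : ℤ) (x : Fin 10 → ℤ) :
    x ∈ gradedPiece (deg14 k) j ↔
      (j ≠ 1 → x 0 = 0 ∧ x 1 = 0 ∧ x 2 = 0) ∧
      (j ≠ 0 → x 3 = 0 ∧ x 4 = 0 ∧ x 5 = 0) ∧
      (j ≠ k + 1 → x 6 = 0) ∧ (j ≠ k - 1 → x 7 = 0) ∧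
      (j ≠ -k → x 8 = 0) ∧ (j ≠ k → x 9 = 0) := by
  rw [mem_gradedPiece]
  constructor
  · intro h
    refine ⟨?_, ?_, ?_, ?_, ?_, ?_⟩ <;> intro hj
    · exact ⟨h 0 (by simp only [deg14_0, deg14_1, deg14_2, deg14_3, deg14_4, deg14_5, deg14_6, deg14_7, deg14_8, deg14_9, ne_eq]; omega), h 1 (by simp only [deg14_0, deg14_1, deg14_2, deg14_3, deg14_4, deg14_5, deg14_6, deg14_7, deg14_8, deg14_9, ne_eq]; omega),
        h 2 (by simp only [deg14_0, deg14_1, deg14_2, deg14_3, deg14_4, deg14_5, deg14_6, deg14_7, deg14_8, deg14_9, ne_eq]; omega)⟩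
    · exact ⟨h 3 (by simp only [deg14_0, deg14_1, deg14_2, deg14_3, deg14_4, deg14_5, deg14_6, deg14_7, deg14_8, deg14_9, ne_eq]; omega), h 4 (by simp only [deg14_0, deg14_1, deg14_2, deg14_3, deg14_4, deg14_5, deg14_6, deg14_7, deg14_8, deg14_9, ne_eq]; omega),
        h 5 (by simp only [deg14_0, deg14_1, deg14_2, deg14_3, deg14_4, deg14_5, deg14_6, deg14_7, deg14_8, deg14_9, ne_eq]; omega)⟩
    · exact h 6 (by simp only [deg14_0, deg14_1, deg14_2, deg14_3, deg14_4, deg14_5, deg14_6, deg14_7, deg14_8, deg14_9, ne_eq]; omega)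
    · exact h 7 (by simp only [deg14_0, deg14_1, deg14_2, deg14_3, deg14_4, deg14_5, deg14_6, deg14_7, deg14_8, deg14_9, ne_eq]; omega)
    · exact h 8 (by simp only [deg14_0, deg14_1, deg14_2, deg14_3, deg14_4, deg14_5, deg14_6, deg14_7, deg14_8, deg14_9, ne_eq]; omega)
    · exact h 9 (by simp only [deg14_0, deg14_1, deg14_2, deg14_3, deg14_4, deg14_5, deg14_6, deg14_7, deg14_8, deg14_9, ne_eq]; omega)
  · rintro ⟨h012, h345, h6, h7, h8, h9⟩ g hg
    fin_cases g <;> simp only [deg14_0, deg14_1, deg14_2, deg14_3, deg14_4, deg14_5, deg14_6, deg14_7, deg14_8, deg14_9, ne_eq] at hg ⊢ <;>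
      first
        | exact (h012 (fun h => hg h.symm)).1
        | exact (h012 (fun h => hg h.symm)).2.1
        | exact (h012 (fun h => hg h.symm)).2.2
        | exact (h345 (fun h => hg h.symm)).1
        | exact (h345 (fun h => hg h.symm)).2.1
        | exact (h345 (fun h => hg h.symm)).2.2
        | exact h6 (fun h => hg h.symm)
        | exact h7 (fun h => hg h.symm)
        | exact h8 (fun h => hg h.symm)
        | exact h9 (fun h => hg h.symm)

lemma engine {R V T : Type*} [Ring R] [AddCommGroup V] [Module R V]
    [AddCommGroup T] [Module R T] (D : V →ₗ[R] V) (P : Submodule R V)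
    (f : V →ₗ[R] T)
    (hker : ∀ x, x ∈ LinearMap.ker D ⊓ P →
      (f x = 0 ↔ x ∈ LinearMap.range D ⊓ P))
    (hsurj : ∀ t : T, ∃ x, x ∈ LinearMap.ker D ⊓ P ∧ f x = t) :
    Nonempty (homologyAt D P ≃ₗ[R] T) := by
  set K := LinearMap.ker D ⊓ P with hK
  let g := f.domRestrict K
  have hg : Function.Surjective g := by
    intro t
    obtain ⟨x, hx, hfx⟩ := hsurj t
    exact ⟨⟨x, hx⟩, hfx⟩
  have hk : Submodule.comap K.subtype (LinearMap.range D ⊓ P)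
      = LinearMap.ker g := by
    ext x
    simp only [Submodule.mem_comap, LinearMap.mem_ker, LinearMap.domRestrict_apply, g]
    exact (hker x.1 x.2).symm
  exact ⟨(Submodule.quotEquivOfEq _ _ hk).trans (g.quotKerEquivOfSurjective hg)⟩

lemma mem_KP (m k j : ℤ) (hm1 : m ≠ 1) (x : Fin 10 → ℤ) :
    x ∈ LinearMap.ker (d14 m k) ⊓ gradedPiece (deg14 k) j ↔
      x 1 = 0 ∧ x 2 = 0 ∧ x 6 = 0 ∧ x 9 = 0 ∧ (j ≠ 1 → x 0 = 0) ∧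
      (j ≠ 0 → x 3 = 0 ∧ x 4 = 0 ∧ x 5 = 0) ∧ (j ≠ k - 1 → x 7 = 0) ∧
      (j ≠ -k → x 8 = 0) := by
  rw [Submodule.mem_inf, mem_ker_d14 m k hm1, mem_P14]
  tauto

lemma mem_RP (m k j : ℤ) (x : Fin 10 → ℤ) :
    x ∈ LinearMap.range (d14 m k) ⊓ gradedPiece (deg14 k) j ↔
      x 0 = 0 ∧ x 1 = 0 ∧ x 2 = 0 ∧ x 6 = 0 ∧ x 9 = 0 ∧
      x 5 = x 3 - m * x 4 ∧ (m - 1) ∣ x 7 ∧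
      (j ≠ 0 → x 3 = 0 ∧ x 4 = 0 ∧ x 5 = 0) ∧ (j ≠ k - 1 → x 7 = 0) ∧
      (j ≠ -k → x 8 = 0) := by
  rw [Submodule.mem_inf, mem_range_d14, mem_P14]
  tauto

/-- Bilinearized LCH of the trefoil-unknot link `Λ_{m,k}` (Section 4.4),
`m ∉ {0,1,2}`: homology is `ℤ` in degree 1 (class of `a1`), `ℤ` in degree 0
(class of `b1 = -[b3]`), `ℤ/(m-1)ℤ` in degree `k-1` (class of `b5`), zero in
all other degrees. -/
theorem stmt_14 (m k : ℤ) (hm0 : m ≠ 0) (hm1 : m ≠ 1) (hm2 : m ≠ 2) :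
    ∀ j : ℤ,
      Nonempty (homologyAt (d14 m k) (gradedPiece (deg14 k) j) ≃ₗ[ℤ]
        ((Fin ((if j = 1 then 1 else 0) + (if j = 0 then 1 else 0)) → ℤ) ×
         (Fin (if j = k - 1 then 1 else 0) → ZMod (m - 1).natAbs))) := by
  intro j
  have hdvd : ∀ a : ℤ, ((a : ZMod (m - 1).natAbs) = 0 ↔ (m - 1) ∣ a) := fun a => by
    rw [ZMod.intCast_zmod_eq_zero_iff_dvd, Int.natAbs_dvd]
  by_cases h1 : j = 1 <;> by_cases h0 : j = 0
  · omega
  all_goals by_cases hk : j = k - 1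
  -- case (j=1, j=k-1)
  · rw [show (if j = 1 then 1 else 0) + (if j = 0 then 1 else 0) = 1 from by
      rw [if_pos h1, if_neg h0], if_pos hk]
    refine engine _ _ ((LinearMap.pi fun _ : Fin 1 => LinearMap.proj (0 : Fin 10)).prod
      (LinearMap.pi fun _ : Fin 1 =>
        (Int.castAddHom (ZMod (m - 1).natAbs)).toIntLinearMap ∘ₗ LinearMap.proj (7 : Fin 10))) ?_ ?_
    · intro x hx
      rw [mem_KP m k j hm1] at hx
      obtain ⟨hx1, hx2, hx6, hx9, -, hx345, -, hx8⟩ := hx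
      obtain ⟨h3, h4, h5⟩ := hx345 (by omega)
      rw [mem_RP]
      simp only [LinearMap.prod_apply, Pi.prod, Function.prod_apply, LinearMap.pi_apply, LinearMap.proj_apply,
        LinearMap.coe_comp, Function.comp_apply, AddMonoidHom.coe_toIntLinearMap,
        Int.coe_castAddHom, Prod.ext_iff, Prod.fst_zero, Prod.snd_zero,
        funext_iff, Pi.zero_apply, Fin.forall_fin_one, hdvd]
      constructor
      · rintro ⟨ha, hb⟩
        exact ⟨ha, hx1, hx2, hx6, hx9, by rw [h3, h4, h5]; ring, hb,
          fun _ => ⟨h3, h4, h5⟩, fun h => absurd hk h, hx8⟩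
      · rintro ⟨ha, -, -, -, -, -, hb, -⟩
        exact ⟨ha, hb⟩
    · rintro ⟨u, v⟩
      obtain ⟨c, hc⟩ := ZMod.intCast_surjective (v 0)
      refine ⟨Pi.single 0 (u 0) + Pi.single 7 c, ?_, ?_⟩
      · rw [mem_KP m k j hm1]
        norm_num [Pi.single_apply]
        omega
      · refine Prod.ext (funext fun i => ?_) (funext fun i => ?_) <;>
          rw [Subsingleton.elim i 0] <;>
          simp [LinearMap.prod_apply, Pi.prod, LinearMap.pi_apply, Pi.single_apply, hc]
  -- case (j=1, j≠k-1)
  · rw [show (if j = 1 then 1 else 0) + (if j = 0 then 1 else 0) = 1 from by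
      rw [if_pos h1, if_neg h0], if_neg hk]
    refine engine _ _ ((LinearMap.pi fun _ : Fin 1 => LinearMap.proj (0 : Fin 10)).prod
      (0 : (Fin 10 → ℤ) →ₗ[ℤ] (Fin 0 → ZMod (m - 1).natAbs))) ?_ ?_
    · intro x hx
      rw [mem_KP m k j hm1] at hx
      obtain ⟨hx1, hx2, hx6, hx9, -, hx345, hx7, hx8⟩ := hx
      obtain ⟨h3, h4, h5⟩ := hx345 (by omega)
      have h7 := hx7 hk
      rw [mem_RP]
      simp only [LinearMap.prod_apply, Pi.prod, Function.prod_apply, LinearMap.pi_apply, LinearMap.proj_apply,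
        Prod.ext_iff, Prod.fst_zero, Prod.snd_zero, funext_iff, Pi.zero_apply,
        Fin.forall_fin_one, LinearMap.zero_apply]
      constructor
      · rintro ⟨ha, -⟩
        exact ⟨ha, hx1, hx2, hx6, hx9, by rw [h3, h4, h5]; ring, by simp [h7],
          fun _ => ⟨h3, h4, h5⟩, fun _ => h7, hx8⟩
      · rintro ⟨ha, -⟩
        refine ⟨ha, ?_⟩
        first | trivial | exact fun i => i.elim0
    · rintro ⟨u, v⟩
      refine ⟨Pi.single 0 (u 0), ?_, ?_⟩
      · rw [mem_KP m k j hm1]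
        norm_num [Pi.single_apply]
        omega
      · refine Prod.ext (funext fun i => ?_) (funext fun i => i.elim0)
        rw [Subsingleton.elim i 0]
        simp [LinearMap.prod_apply, Pi.prod, LinearMap.pi_apply, Pi.single_apply]
  -- case (j=0, j=k-1)
  · rw [show (if j = 1 then 1 else 0) + (if j = 0 then 1 else 0) = 1 from by
      rw [if_neg h1, if_pos h0], if_pos hk]
    refine engine _ _
      ((LinearMap.pi fun _ : Fin 1 => (LinearMap.proj (3 : Fin 10)
          - m • LinearMap.proj (4 : Fin 10) - LinearMap.proj (5 : Fin 10))).prod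
      (LinearMap.pi fun _ : Fin 1 =>
        (Int.castAddHom (ZMod (m - 1).natAbs)).toIntLinearMap ∘ₗ LinearMap.proj (7 : Fin 10))) ?_ ?_
    · intro x hx
      rw [mem_KP m k j hm1] at hx
      obtain ⟨hx1, hx2, hx6, hx9, hx0, -, -, hx8⟩ := hx
      have h00 := hx0 (by omega)
      rw [mem_RP]
      simp only [LinearMap.prod_apply, Pi.prod, Function.prod_apply, LinearMap.pi_apply, LinearMap.proj_apply,
        LinearMap.coe_comp, Function.comp_apply, AddMonoidHom.coe_toIntLinearMap,
        Int.coe_castAddHom, Prod.ext_iff, Prod.fst_zero, Prod.snd_zero,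
        LinearMap.sub_apply, LinearMap.smul_apply, smul_eq_mul,
        funext_iff, Pi.zero_apply, Fin.forall_fin_one, hdvd]
      constructor
      · rintro ⟨ha, hb⟩
        exact ⟨h00, hx1, hx2, hx6, hx9, by linarith [ha], hb,
          fun h => absurd h0 h, fun h => absurd hk h, hx8⟩
      · rintro ⟨-, -, -, -, -, hs, hb, -⟩
        exact ⟨by linarith [hs], hb⟩
    · rintro ⟨u, v⟩
      obtain ⟨c, hc⟩ := ZMod.intCast_surjective (v 0)
      refine ⟨Pi.single 3 (u 0) + Pi.single 7 c, ?_, ?_⟩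
      · rw [mem_KP m k j hm1]
        norm_num [Pi.single_apply]
        omega
      · refine Prod.ext (funext fun i => ?_) (funext fun i => ?_) <;>
          rw [Subsingleton.elim i 0] <;>
          simp [LinearMap.prod_apply, Pi.prod, LinearMap.pi_apply, Pi.single_apply, hc]
  -- case (j=0, j≠k-1)
  · rw [show (if j = 1 then 1 else 0) + (if j = 0 then 1 else 0) = 1 from by
      rw [if_neg h1, if_pos h0], if_neg hk]
    refine engine _ _
      ((LinearMap.pi fun _ : Fin 1 => (LinearMap.proj (3 : Fin 10)
          - m • LinearMap.proj (4 : Fin 10) - LinearMap.proj (5 : Fin 10))).prod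
      (0 : (Fin 10 → ℤ) →ₗ[ℤ] (Fin 0 → ZMod (m - 1).natAbs))) ?_ ?_
    · intro x hx
      rw [mem_KP m k j hm1] at hx
      obtain ⟨hx1, hx2, hx6, hx9, hx0, -, hx7, hx8⟩ := hx
      have h00 := hx0 (by omega)
      have h7 := hx7 hk
      rw [mem_RP]
      simp only [LinearMap.prod_apply, Pi.prod, Function.prod_apply, LinearMap.pi_apply, LinearMap.proj_apply,
        Prod.ext_iff, Prod.fst_zero, Prod.snd_zero, LinearMap.sub_apply,
        LinearMap.smul_apply, smul_eq_mul, funext_iff, Pi.zero_apply,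
        Fin.forall_fin_one, LinearMap.zero_apply]
      constructor
      · rintro ⟨ha, -⟩
        exact ⟨h00, hx1, hx2, hx6, hx9, by linarith [ha], by simp [h7],
          fun h => absurd h0 h, fun _ => h7, hx8⟩
      · rintro ⟨-, -, -, -, -, hs, -, -⟩
        refine ⟨by linarith [hs], ?_⟩
        first | trivial | exact fun i => i.elim0
    · rintro ⟨u, v⟩
      refine ⟨Pi.single 3 (u 0), ?_, ?_⟩
      · rw [mem_KP m k j hm1]
        norm_num [Pi.single_apply]
        omega
      · refine Prod.ext (funext fun i => ?_) (funext fun i => i.elim0)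
        rw [Subsingleton.elim i 0]
        simp [LinearMap.prod_apply, Pi.prod, LinearMap.pi_apply, Pi.single_apply]
  -- case (j≠1, j≠0, j=k-1)
  · rw [show (if j = 1 then 1 else 0) + (if j = 0 then 1 else 0) = 0 from by
      rw [if_neg h1, if_neg h0], if_pos hk]
    refine engine _ _
      ((0 : (Fin 10 → ℤ) →ₗ[ℤ] (Fin 0 → ℤ)).prod
      (LinearMap.pi fun _ : Fin 1 =>
        (Int.castAddHom (ZMod (m - 1).natAbs)).toIntLinearMap ∘ₗ LinearMap.proj (7 : Fin 10))) ?_ ?_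
    · intro x hx
      rw [mem_KP m k j hm1] at hx
      obtain ⟨hx1, hx2, hx6, hx9, hx0, hx345, -, hx8⟩ := hx
      have h00 := hx0 h1
      obtain ⟨h3, h4, h5⟩ := hx345 h0
      rw [mem_RP]
      simp only [LinearMap.prod_apply, Pi.prod, Function.prod_apply, LinearMap.pi_apply, LinearMap.proj_apply,
        LinearMap.coe_comp, Function.comp_apply, AddMonoidHom.coe_toIntLinearMap,
        Int.coe_castAddHom, Prod.ext_iff, Prod.fst_zero, Prod.snd_zero,
        funext_iff, Pi.zero_apply, Fin.forall_fin_one, LinearMap.zero_apply, hdvd]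
      constructor
      · rintro ⟨-, hb⟩
        exact ⟨h00, hx1, hx2, hx6, hx9, by rw [h3, h4, h5]; ring, hb,
          fun _ => ⟨h3, h4, h5⟩, fun h => absurd hk h, hx8⟩
      · rintro ⟨-, -, -, -, -, -, hb, -⟩
        refine ⟨?_, hb⟩
        first | trivial | exact fun i => i.elim0
    · rintro ⟨u, v⟩
      obtain ⟨c, hc⟩ := ZMod.intCast_surjective (v 0)
      refine ⟨Pi.single 7 c, ?_, ?_⟩
      · rw [mem_KP m k j hm1]
        norm_num [Pi.single_apply]
        omega
      · refine Prod.ext (funext fun i => i.elim0) (funext fun i => ?_)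
        rw [Subsingleton.elim i 0]
        simp [LinearMap.prod_apply, Pi.prod, LinearMap.pi_apply, Pi.single_apply, hc]
  -- case (j≠1, j≠0, j≠k-1)
  · rw [show (if j = 1 then 1 else 0) + (if j = 0 then 1 else 0) = 0 from by
      rw [if_neg h1, if_neg h0], if_neg hk]
    refine engine _ _
      (0 : (Fin 10 → ℤ) →ₗ[ℤ] (Fin 0 → ℤ) × (Fin 0 → ZMod (m - 1).natAbs)) ?_ ?_
    · intro x hx
      rw [mem_KP m k j hm1] at hx
      obtain ⟨hx1, hx2, hx6, hx9, hx0, hx345, hx7, hx8⟩ := hx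
      have h00 := hx0 h1
      obtain ⟨h3, h4, h5⟩ := hx345 h0
      have h7 := hx7 hk
      rw [mem_RP]
      constructor
      · intro _
        exact ⟨h00, hx1, hx2, hx6, hx9, by rw [h3, h4, h5]; ring, by simp [h7],
          fun _ => ⟨h3, h4, h5⟩, fun _ => h7, hx8⟩
      · intro _
        simp
    · rintro ⟨u, v⟩
      refine ⟨0, ?_, ?_⟩
      · rw [mem_KP m k j hm1]
        norm_num
      · exact Prod.ext (funext fun i => i.elim0) (funext fun i => i.elim0)
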